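/- Let A, a, b define the rank-1 game (A, −A + abᵀ), and suppose λ̲ ≤ λ̄, (λ̲, x̲, y̲) and (λ̄, x̄, ȳ) both lie in the set N of equilibria of the parameterized zero-sum games, with λ̲ ≤ x̲ᵀa and x̄ᵀa ≤ λ̄. Then there exists (λ, x, y) ∈ N with λ ∈ [λ̲, λ̄] and xᵀa = λ; consequently the game (A, −A + abᵀ) has a Nash equilibrium. -/

import Mathlib

open Matrix Filter Topology

def simplex (m : ℕ) : Set (Fin m → ℝ) := {x | (∀ i, 0 ≤ x i) ∧ ∑ i, x i = 1}

def isNash {m n : ℕ} (A B : Matrix (Fin m) (Fin n) ℝ)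
    (x : Fin m → ℝ) (y : Fin n → ℝ) : Prop :=
  x ∈ simplex m ∧ y ∈ simplex n ∧
  (∀ x' ∈ simplex m, x' ⬝ᵥ A.mulVec y ≤ x ⬝ᵥ A.mulVec y) ∧
  (∀ y' ∈ simplex n, x ⬝ᵥ B.mulVec y' ≤ x ⬝ᵥ B.mulVec y)

def Nset {m n : ℕ} (A : Matrix (Fin m) (Fin n) ℝ) (b : Fin n → ℝ) :
    Set (ℝ × (Fin m → ℝ) × (Fin n → ℝ)) :=
  {t | isNash (A - Matrix.of fun _ j => t.1 * b j)
      (-A + Matrix.of fun _ j => t.1 * b j) t.2.1 t.2.2}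


lemma simplex_nonempty {m : ℕ} (hm : m ≠ 0) : (simplex m).Nonempty := by
  have : NeZero m := ⟨hm⟩
  refine ⟨Pi.single ⟨0, Nat.pos_of_ne_zero hm⟩ 1, fun i => ?_, by simp⟩
  rcases eq_or_ne i ⟨0, Nat.pos_of_ne_zero hm⟩ with h | h <;> simp [Pi.single_apply, h] <;> split_ifs <;> norm_num

lemma simplex_ne_zero {m : ℕ} {x : Fin m → ℝ} (hx : x ∈ simplex m) : m ≠ 0 := by
  rintro rfl
  simpa using hx.2

lemma simplex_comb {m : ℕ} {x1 x2 : Fin m → ℝ} (h1 : x1 ∈ simplex m) (h2 : x2 ∈ simplex m)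
    {t : ℝ} (ht0 : 0 ≤ t) (ht1 : t ≤ 1) : (t • x1 + (1 - t) • x2) ∈ simplex m := by
  constructor
  · intro i
    have := h1.1 i; have := h2.1 i
    have : 0 ≤ 1 - t := by linarith
    simp only [Pi.add_apply, Pi.smul_apply, smul_eq_mul]
    nlinarith [h1.1 i, h2.1 i]
  · simp only [Pi.add_apply, Pi.smul_apply, smul_eq_mul, Finset.sum_add_distrib, ← Finset.mul_sum,
      h1.2, h2.2]
    ring

lemma dot_le_sup' {m : ℕ} [NeZero m] {x : Fin m → ℝ} (hx : x ∈ simplex m) (u : Fin m → ℝ) :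
    x ⬝ᵥ u ≤ Finset.univ.sup' ⟨_, Finset.mem_univ (0 : Fin m)⟩ u := by
  set M := Finset.univ.sup' ⟨_, Finset.mem_univ (0 : Fin m)⟩ u with hM
  calc x ⬝ᵥ u = ∑ i, x i * u i := rfl
    _ ≤ ∑ i, x i * M := by
        refine Finset.sum_le_sum fun i _ => ?_
        exact mul_le_mul_of_nonneg_left (Finset.le_sup' u (Finset.mem_univ i)) (hx.1 i)
    _ = M := by rw [← Finset.sum_mul, hx.2, one_mul]

lemma inf'_le_dot {m : ℕ} [NeZero m] {x : Fin m → ℝ} (hx : x ∈ simplex m) (u : Fin m → ℝ) :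
    Finset.univ.inf' ⟨_, Finset.mem_univ (0 : Fin m)⟩ u ≤ x ⬝ᵥ u := by
  set M := Finset.univ.inf' ⟨_, Finset.mem_univ (0 : Fin m)⟩ u with hM
  calc M = ∑ i, x i * M := by rw [← Finset.sum_mul, hx.2, one_mul]
    _ ≤ ∑ i, x i * u i := by
        refine Finset.sum_le_sum fun i _ => ?_
        exact mul_le_mul_of_nonneg_left (Finset.inf'_le u (Finset.mem_univ i)) (hx.1 i)
    _ = x ⬝ᵥ u := rfl

lemma isClosed_simplex (m : ℕ) : IsClosed (simplex m) := by
  have h1 : IsClosed {x : Fin m → ℝ | ∀ i, 0 ≤ x i} := by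
    rw [Set.setOf_forall]
    exact isClosed_iInter fun i => isClosed_le continuous_const (continuous_apply i)
  have h2 : IsClosed {x : Fin m → ℝ | ∑ i, x i = 1} :=
    isClosed_eq (by continuity) continuous_const
  exact h1.inter h2

lemma isCompact_simplex (m : ℕ) : IsCompact (simplex m) := by
  rw [Metric.isCompact_iff_isClosed_bounded]
  refine ⟨isClosed_simplex m, ?_⟩
  rw [Metric.isBounded_iff_subset_closedBall 0]
  refine ⟨1, fun x hx => ?_⟩
  rw [Metric.mem_closedBall, dist_zero_right]
  refine (pi_norm_le_iff_of_nonneg zero_le_one).2 fun i => ?_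
  rw [Real.norm_eq_abs, abs_of_nonneg (hx.1 i)]
  calc x i ≤ ∑ j, x j := Finset.single_le_sum (fun j _ => hx.1 j) (Finset.mem_univ i)
    _ = 1 := hx.2

lemma cont_pay1 {m n : ℕ} (A : Matrix (Fin m) (Fin n) ℝ) (b : Fin n → ℝ) (x' : Fin m → ℝ) :
    Continuous fun t : ℝ × (Fin m → ℝ) × (Fin n → ℝ) =>
      x' ⬝ᵥ (A - Matrix.of fun _ j => t.1 * b j).mulVec t.2.2 := by
  simp only [dotProduct, mulVec, Matrix.sub_apply, Matrix.of_apply]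
  refine continuous_finset_sum _ fun i _ => Continuous.mul continuous_const ?_
  refine continuous_finset_sum _ fun j _ => Continuous.mul ?_ ?_
  · exact Continuous.sub continuous_const (continuous_fst.mul continuous_const)
  · exact (continuous_apply j).comp (continuous_snd.comp continuous_snd)

lemma cont_pay2 {m n : ℕ} (A : Matrix (Fin m) (Fin n) ℝ) (b : Fin n → ℝ) :
    Continuous fun t : ℝ × (Fin m → ℝ) × (Fin n → ℝ) =>
      t.2.1 ⬝ᵥ (A - Matrix.of fun _ j => t.1 * b j).mulVec t.2.2 := by
  simp only [dotProduct, mulVec, Matrix.sub_apply, Matrix.of_apply]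
  refine continuous_finset_sum _ fun i _ => Continuous.mul
    ((continuous_apply i).comp (continuous_fst.comp continuous_snd)) ?_
  refine continuous_finset_sum _ fun j _ => Continuous.mul ?_ ?_
  · exact Continuous.sub continuous_const (continuous_fst.mul continuous_const)
  · exact (continuous_apply j).comp (continuous_snd.comp continuous_snd)

lemma cont_pay3 {m n : ℕ} (A : Matrix (Fin m) (Fin n) ℝ) (b : Fin n → ℝ) (y' : Fin n → ℝ) :
    Continuous fun t : ℝ × (Fin m → ℝ) × (Fin n → ℝ) =>
      t.2.1 ⬝ᵥ (-A + Matrix.of fun _ j => t.1 * b j).mulVec y' := by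
  simp only [dotProduct, mulVec, Matrix.add_apply, Matrix.neg_apply, Matrix.of_apply]
  refine continuous_finset_sum _ fun i _ => Continuous.mul
    ((continuous_apply i).comp (continuous_fst.comp continuous_snd)) ?_
  refine continuous_finset_sum _ fun j _ => Continuous.mul ?_ continuous_const
  exact Continuous.add continuous_const (continuous_fst.mul continuous_const)

lemma cont_pay4 {m n : ℕ} (A : Matrix (Fin m) (Fin n) ℝ) (b : Fin n → ℝ) :
    Continuous fun t : ℝ × (Fin m → ℝ) × (Fin n → ℝ) =>
      t.2.1 ⬝ᵥ (-A + Matrix.of fun _ j => t.1 * b j).mulVec t.2.2 := by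
  simp only [dotProduct, mulVec, Matrix.add_apply, Matrix.neg_apply, Matrix.of_apply]
  refine continuous_finset_sum _ fun i _ => Continuous.mul
    ((continuous_apply i).comp (continuous_fst.comp continuous_snd)) ?_
  refine continuous_finset_sum _ fun j _ => Continuous.mul
    (Continuous.add continuous_const (continuous_fst.mul continuous_const))
    ((continuous_apply j).comp (continuous_snd.comp continuous_snd))

lemma isClosed_simplex' (m : ℕ) : IsClosed (simplex m) := by
  have h1 : IsClosed {x : Fin m → ℝ | ∀ i, 0 ≤ x i} := by
    rw [Set.setOf_forall]
    exact isClosed_iInter fun i => isClosed_le continuous_const (continuous_apply i)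
  have h2 : IsClosed {x : Fin m → ℝ | ∑ i, x i = 1} :=
    isClosed_eq (by continuity) continuous_const
  exact h1.inter h2

lemma isClosed_Nset {m n : ℕ} (A : Matrix (Fin m) (Fin n) ℝ) (b : Fin n → ℝ) :
    IsClosed (Nset A b) := by
  have hX : IsClosed {t : ℝ × (Fin m → ℝ) × (Fin n → ℝ) | t.2.1 ∈ simplex m} :=
    (isClosed_simplex' m).preimage (continuous_fst.comp continuous_snd)
  have hY : IsClosed {t : ℝ × (Fin m → ℝ) × (Fin n → ℝ) | t.2.2 ∈ simplex n} :=
    (isClosed_simplex' n).preimage (continuous_snd.comp continuous_snd)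
  have h3 : IsClosed {t : ℝ × (Fin m → ℝ) × (Fin n → ℝ) | ∀ x' ∈ simplex m,
      x' ⬝ᵥ (A - Matrix.of fun _ j => t.1 * b j).mulVec t.2.2 ≤
      t.2.1 ⬝ᵥ (A - Matrix.of fun _ j => t.1 * b j).mulVec t.2.2} := by
    rw [Set.setOf_forall]
    refine isClosed_iInter fun x' => ?_
    rw [Set.setOf_forall]
    refine isClosed_iInter fun _ => isClosed_le (cont_pay1 A b x') (cont_pay2 A b)
  have h4 : IsClosed {t : ℝ × (Fin m → ℝ) × (Fin n → ℝ) | ∀ y' ∈ simplex n,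
      t.2.1 ⬝ᵥ (-A + Matrix.of fun _ j => t.1 * b j).mulVec y' ≤
      t.2.1 ⬝ᵥ (-A + Matrix.of fun _ j => t.1 * b j).mulVec t.2.2} := by
    rw [Set.setOf_forall]
    refine isClosed_iInter fun y' => ?_
    rw [Set.setOf_forall]
    refine isClosed_iInter fun _ => isClosed_le (cont_pay3 A b y') (cont_pay4 A b)
  have heq : Nset A b = ({t : ℝ × (Fin m → ℝ) × (Fin n → ℝ) | t.2.1 ∈ simplex m} ∩
      {t | t.2.2 ∈ simplex n} ∩
      {t | ∀ x' ∈ simplex m,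
        x' ⬝ᵥ (A - Matrix.of fun _ j => t.1 * b j).mulVec t.2.2 ≤
        t.2.1 ⬝ᵥ (A - Matrix.of fun _ j => t.1 * b j).mulVec t.2.2} ∩
      {t | ∀ y' ∈ simplex n,
        t.2.1 ⬝ᵥ (-A + Matrix.of fun _ j => t.1 * b j).mulVec y' ≤
        t.2.1 ⬝ᵥ (-A + Matrix.of fun _ j => t.1 * b j).mulVec t.2.2}) := by
    ext t
    simp only [Nset, isNash, Set.mem_inter_iff, Set.mem_setOf_eq]
    tauto
  rw [heq]
  exact ((hX.inter hY).inter h3).inter h4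

lemma alternative {m n : ℕ} [NeZero m] (C : Matrix (Fin m) (Fin n) ℝ) :
    (∃ y ∈ simplex n, ∀ i, C.mulVec y i ≤ 0) ∨
    (∃ x ∈ simplex m, ∀ j, 0 < x ⬝ᵥ fun i => C i j) := by
  classical
  set g : (Fin m) ⊕ (Fin n) → (Fin m → ℝ) :=
    Sum.elim (fun i => Pi.single i 1) (fun j i => C i j) with hg
  set K := convexHull ℝ (Set.range g) with hK
  by_cases h0 : (0 : Fin m → ℝ) ∈ K
  · left
    rw [hK, mem_convexHull_iff_exists_fintype] at h0
    obtain ⟨ι, _, w, z, hw0, hw1, hz, hsum⟩ := h0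
    choose k hk using fun i => Set.mem_range.mp (hz i)
    set u : (Fin m) ⊕ (Fin n) → ℝ :=
      fun c => ∑ i ∈ Finset.univ.filter (fun i => k i = c), w i with hu
    have hu0 : ∀ c, 0 ≤ u c := fun c => Finset.sum_nonneg fun i _ => hw0 i
    have husum : ∑ c, u c = 1 := by
      rw [hu, Finset.sum_fiberwise_of_maps_to (fun i _ => Finset.mem_univ (k i)) w, hw1]
    have huvec : ∑ c, u c • g c = 0 := by
      calc ∑ c, u c • g c
          = ∑ c, ∑ i ∈ Finset.univ.filter (fun i => k i = c), w i • g (k i) := by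
            refine Finset.sum_congr rfl fun c _ => ?_
            rw [Finset.sum_smul]
            exact Finset.sum_congr rfl fun i hi => by rw [(Finset.mem_filter.mp hi).2]
        _ = ∑ i, w i • g (k i) :=
            Finset.sum_fiberwise_of_maps_to (fun i _ => Finset.mem_univ (k i)) _
        _ = ∑ i, w i • z i := Finset.sum_congr rfl fun i _ => by rw [hk i]
        _ = 0 := hsum
    -- coordinate identity
    have hcoord : ∀ i0 : Fin m, u (Sum.inl i0) + ∑ j, u (Sum.inr j) * C i0 j = 0 := by
      intro i0
      have h := congrFun huvec i0
      rw [Finset.sum_apply, Fintype.sum_sum_type] at h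
      simp only [Pi.smul_apply, smul_eq_mul, hg, Sum.elim_inl, Sum.elim_inr,
        Pi.zero_apply] at h
      have h1 : ∑ x : Fin m, u (Sum.inl x) * (Pi.single x (1:ℝ) : Fin m → ℝ) i0
          = u (Sum.inl i0) := by
        rw [Finset.sum_eq_single i0]
        · simp
        · intro i _ hi
          simp [Pi.single_apply, hi]
        · simp
      rw [h1] at h
      exact h
    set S := ∑ j, u (Sum.inr j) with hS
    have hS0 : 0 ≤ S := Finset.sum_nonneg fun j _ => hu0 _
    rcases eq_or_lt_of_le hS0 with hSz | hSpos
    · exfalso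
      have hz2 : ∀ j, u (Sum.inr j) = 0 := by
        intro j
        have := Finset.sum_eq_zero_iff_of_nonneg (fun j _ => hu0 (Sum.inr j)) |>.mp hSz.symm
        exact this j (Finset.mem_univ j)
      have hz1 : ∀ i, u (Sum.inl i) = 0 := by
        intro i
        have := hcoord i
        rw [Finset.sum_eq_zero (fun j _ => by rw [hz2 j, zero_mul])] at this
        linarith
      rw [Fintype.sum_sum_type] at husum
      simp [hz1, hz2] at husum
    · refine ⟨fun j => u (Sum.inr j) / S, ⟨fun j => div_nonneg (hu0 _) hS0, ?_⟩, ?_⟩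
      · rw [← Finset.sum_div, ← hS, div_self (ne_of_gt hSpos)]
      · intro i0
        have key := hcoord i0
        have : C.mulVec (fun j => u (Sum.inr j) / S) i0
            = (∑ j, u (Sum.inr j) * C i0 j) / S := by
          simp only [mulVec, dotProduct]
          rw [Finset.sum_div]
          exact Finset.sum_congr rfl fun j _ => by ring
        rw [this]
        apply div_nonpos_of_nonpos_of_nonneg _ hS0
        have := hu0 (Sum.inl i0)
        linarith
  · right
    obtain ⟨f, s, hfa, hs⟩ := geometric_hahn_banach_closed_point
      (convex_convexHull ℝ _) ((Set.finite_range g).isClosed_convexHull (𝕜 := ℝ)) h0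
    rw [map_zero] at hs
    have hneg : ∀ v ∈ K, f v < 0 := fun v hv => lt_trans (hfa v hv) hs
    have hmem : ∀ c, g c ∈ K := fun c => subset_convexHull ℝ _ (Set.mem_range_self c)
    set x0 : Fin m → ℝ := fun i => -f (Pi.single i 1) with hx0
    have hx0pos : ∀ i, 0 < x0 i := by
      intro i
      have := hneg _ (hmem (Sum.inl i))
      simp only [hg, Sum.elim_inl] at this
      simp [hx0]; linarith
    set T := ∑ i, x0 i with hT
    have hTpos : 0 < T := Finset.sum_pos (fun i _ => hx0pos i) Finset.univ_nonempty
    have hf : ∀ v : Fin m → ℝ, f v = ∑ i, v i * f (Pi.single i 1) := by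
      intro v
      have hv : v = ∑ i, v i • (Pi.single i 1 : Fin m → ℝ) := by
        ext j
        rw [Finset.sum_apply, Finset.sum_eq_single j]
        · simp
        · intro i _ hi
          simp [Pi.single_apply, Ne.symm hi]
        · simp
      conv_lhs => rw [hv]
      rw [map_sum]
      exact Finset.sum_congr rfl fun i _ => by rw [_root_.map_smul]; simp
    refine ⟨fun i => x0 i / T, ⟨fun i => div_nonneg (hx0pos i).le hTpos.le, ?_⟩, ?_⟩
    · rw [← Finset.sum_div, ← hT, div_self (ne_of_gt hTpos)]
    · intro j
      have hcol := hneg _ (hmem (Sum.inr j))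
      simp only [hg, Sum.elim_inr] at hcol
      rw [hf] at hcol
      have hsum : (fun i => x0 i / T) ⬝ᵥ (fun i => C i j)
          = (-(∑ i, C i j * f (Pi.single i 1))) / T := by
        simp only [dotProduct]
        rw [← Finset.sum_neg_distrib, Finset.sum_div]
        refine Finset.sum_congr rfl fun i _ => ?_
        simp only [hx0]
        ring
      rw [hsum]
      apply div_pos _ hTpos
      linarith

lemma dot_swap {m n : ℕ} (C : Matrix (Fin m) (Fin n) ℝ) (x : Fin m → ℝ) (y : Fin n → ℝ) :
    x ⬝ᵥ C.mulVec y = y ⬝ᵥ (fun j => x ⬝ᵥ fun i => C i j) := by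
  simp only [dotProduct, mulVec, Finset.mul_sum]
  rw [Finset.sum_comm]
  exact Finset.sum_congr rfl fun j _ => Finset.sum_congr rfl fun i _ => by ring

lemma exists_nash_zero_sum {m n : ℕ} (hm : m ≠ 0) (hn : n ≠ 0)
    (C : Matrix (Fin m) (Fin n) ℝ) :
    ∃ x ∈ simplex m, ∃ y ∈ simplex n,
      (∀ x' ∈ simplex m, x' ⬝ᵥ C.mulVec y ≤ x ⬝ᵥ C.mulVec y) ∧
      (∀ y' ∈ simplex n, x ⬝ᵥ C.mulVec y ≤ x ⬝ᵥ C.mulVec y') := by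
  haveI : NeZero m := ⟨hm⟩
  haveI : NeZero n := ⟨hn⟩
  have neM : (Finset.univ : Finset (Fin m)).Nonempty := ⟨0, Finset.mem_univ 0⟩
  have neN : (Finset.univ : Finset (Fin n)).Nonempty := ⟨0, Finset.mem_univ 0⟩
  set φ : (Fin n → ℝ) → ℝ :=
    fun y => Finset.univ.sup' ⟨_, Finset.mem_univ (0 : Fin m)⟩ (C.mulVec y) with hφ
  set ψ : (Fin m → ℝ) → ℝ :=
    fun x => Finset.univ.inf' ⟨_, Finset.mem_univ (0 : Fin n)⟩
      (fun j => x ⬝ᵥ fun i => C i j) with hψ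
  have hφc : Continuous φ := by
    refine Continuous.finset_sup'_apply _ fun i _ => ?_
    simp only [mulVec, dotProduct]
    exact continuous_finset_sum _ fun j _ => (continuous_const.mul (continuous_apply j))
  have hψc : Continuous ψ := by
    refine Continuous.finset_inf'_apply _ fun j _ => ?_
    simp only [dotProduct]
    exact continuous_finset_sum _ fun i _ => ((continuous_apply i).mul continuous_const)
  obtain ⟨yh, hyhY, hyh⟩ := (isCompact_simplex n).exists_isMinOn (simplex_nonempty hn)
    hφc.continuousOn
  obtain ⟨xh, hxhX, hxh⟩ := (isCompact_simplex m).exists_isMaxOn (simplex_nonempty hm)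
    hψc.continuousOn
  set v := ψ xh with hv
  set w := φ yh with hw
  have hmid : xh ⬝ᵥ C.mulVec yh ≤ w := dot_le_sup' hxhX _
  have hmid2 : v ≤ xh ⬝ᵥ C.mulVec yh := by
    rw [dot_swap]
    exact inf'_le_dot hyhY _
  have hvw : v ≤ w := le_trans hmid2 hmid
  have hveqw : v = w := by
    by_contra hne
    have hlt : v < w := lt_of_le_of_ne hvw hne
    set c := (v + w) / 2 with hc
    have hvc : v < c := by rw [hc]; linarith
    have hcw : c < w := by rw [hc]; linarith
    rcases alternative (Matrix.of fun i j => C i j - c) with ⟨y, hyY, hy⟩ | ⟨x, hxX, hx⟩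
    · have hφy : φ y ≤ c := by
        refine Finset.sup'_le _ _ fun i _ => ?_
        have := hy i
        have heq : (Matrix.of fun i j => C i j - c).mulVec y i = C.mulVec y i - c := by
          simp only [mulVec, dotProduct, Matrix.of_apply, sub_mul]
          rw [Finset.sum_sub_distrib, ← Finset.mul_sum]
          rw [show ∑ j, y j = 1 from hyY.2, mul_one]
        rw [heq] at this
        linarith
      have := hyh hyY
      simp only [Set.mem_setOf_eq] at this
      have : w ≤ φ y := this
      linarith
    · have hψx : c ≤ ψ x := by
        refine Finset.le_inf' _ _ fun j _ => ?_
        have := hx j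
        have heq : (x ⬝ᵥ fun i => (Matrix.of fun i j => C i j - c) i j)
            = (x ⬝ᵥ fun i => C i j) - c := by
          simp only [dotProduct, Matrix.of_apply, mul_sub]
          rw [Finset.sum_sub_distrib, ← Finset.sum_mul]
          rw [show ∑ i, x i = 1 from hxX.2, one_mul]
        rw [heq] at this
        linarith
      have := hxh hxX
      simp only [Set.mem_setOf_eq] at this
      have : ψ x ≤ v := this
      linarith
  refine ⟨xh, hxhX, yh, hyhY, fun x' hx' => ?_, fun y' hy' => ?_⟩
  · calc x' ⬝ᵥ C.mulVec yh ≤ w := dot_le_sup' hx' _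
      _ = v := hveqw.symm
      _ ≤ xh ⬝ᵥ C.mulVec yh := hmid2
  · calc xh ⬝ᵥ C.mulVec yh ≤ w := hmid
      _ = v := hveqw.symm
      _ ≤ xh ⬝ᵥ C.mulVec y' := by rw [dot_swap]; exact inf'_le_dot hy' _

def zsNash {m n : ℕ} (C : Matrix (Fin m) (Fin n) ℝ) (x : Fin m → ℝ) (y : Fin n → ℝ) : Prop :=
  x ∈ simplex m ∧ y ∈ simplex n ∧
  (∀ x' ∈ simplex m, x' ⬝ᵥ C.mulVec y ≤ x ⬝ᵥ C.mulVec y) ∧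
  (∀ y' ∈ simplex n, x ⬝ᵥ C.mulVec y ≤ x ⬝ᵥ C.mulVec y')

lemma mem_Nset_iff {m n : ℕ} (A : Matrix (Fin m) (Fin n) ℝ) (b : Fin n → ℝ)
    (lam : ℝ) (x : Fin m → ℝ) (y : Fin n → ℝ) :
    (lam, x, y) ∈ Nset A b ↔ zsNash (A - Matrix.of fun _ j => lam * b j) x y := by
  have hBC : (-A + Matrix.of fun _ j => lam * b j)
      = -(A - Matrix.of fun _ j => lam * b j) := by rw [neg_sub, sub_eq_add_neg, add_comm]
  constructor
  · rintro ⟨hx, hy, hmax, hmin⟩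
    refine ⟨hx, hy, hmax, fun y' hy' => ?_⟩
    have := hmin y' hy'
    rw [hBC, neg_mulVec, neg_mulVec, dotProduct_neg, dotProduct_neg] at this
    linarith
  · rintro ⟨hx, hy, hmax, hmin⟩
    refine ⟨hx, hy, hmax, fun y' hy' => ?_⟩
    show _ ⬝ᵥ (-A + Matrix.of fun _ j => lam * b j).mulVec _ ≤ _
    rw [hBC, neg_mulVec, neg_mulVec, dotProduct_neg, dotProduct_neg]
    have := hmin y' hy'
    linarith

lemma zs_comb {m n : ℕ} {C : Matrix (Fin m) (Fin n) ℝ} {x1 x2 : Fin m → ℝ}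
    {y1 y2 : Fin n → ℝ} (h1 : zsNash C x1 y1) (h2 : zsNash C x2 y2)
    {t : ℝ} (ht0 : 0 ≤ t) (ht1 : t ≤ 1) :
    zsNash C (t • x1 + (1 - t) • x2) y1 := by
  obtain ⟨hx1, hy1, hmax1, hmin1⟩ := h1
  obtain ⟨hx2, hy2, hmax2, hmin2⟩ := h2
  set v1 := x1 ⬝ᵥ C.mulVec y1 with hv1
  set v2 := x2 ⬝ᵥ C.mulVec y2 with hv2
  have e1 : v2 ≤ x2 ⬝ᵥ C.mulVec y1 := hmin2 y1 hy1
  have e2 : x2 ⬝ᵥ C.mulVec y1 ≤ v1 := hmax1 x2 hx2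
  have e3 : v1 ≤ x1 ⬝ᵥ C.mulVec y2 := hmin1 y2 hy2
  have e4 : x1 ⬝ᵥ C.mulVec y2 ≤ v2 := hmax2 x1 hx1
  have hveq : v1 = v2 := by linarith
  have hx2y1 : x2 ⬝ᵥ C.mulVec y1 = v1 := by linarith
  have hzX : (t • x1 + (1 - t) • x2) ∈ simplex m := simplex_comb hx1 hx2 ht0 ht1
  have hzdot : ∀ u : Fin n → ℝ, (t • x1 + (1 - t) • x2) ⬝ᵥ C.mulVec u
      = t * (x1 ⬝ᵥ C.mulVec u) + (1 - t) * (x2 ⬝ᵥ C.mulVec u) := by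
    intro u
    rw [add_dotProduct, smul_dotProduct, smul_dotProduct]
    simp [smul_eq_mul]
  have hzval : (t • x1 + (1 - t) • x2) ⬝ᵥ C.mulVec y1 = v1 := by
    rw [hzdot, hx2y1, ← hv1]; ring
  refine ⟨hzX, hy1, fun x' hx' => ?_, fun y' hy' => ?_⟩
  · rw [hzval]; exact hmax1 x' hx'
  · rw [hzval, hzdot]
    have g1 : v1 ≤ x1 ⬝ᵥ C.mulVec y' := hmin1 y' hy'
    have g2 : v2 ≤ x2 ⬝ᵥ C.mulVec y' := hmin2 y' hy'
    nlinarith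

lemma dot_const_mulVec {m n : ℕ} {x : Fin m → ℝ} (hx : x ∈ simplex m) (lam : ℝ)
    (b : Fin n → ℝ) (y : Fin n → ℝ) :
    x ⬝ᵥ (Matrix.of fun _ j => lam * b j).mulVec y = lam * (b ⬝ᵥ y) := by
  simp only [dotProduct, mulVec, Matrix.of_apply]
  have : ∀ i : Fin m, (∑ j, lam * b j * y j) = lam * (∑ j, b j * y j) := by
    intro i
    rw [Finset.mul_sum]
    exact Finset.sum_congr rfl fun j _ => by ring
  calc ∑ i, x i * ∑ j, lam * b j * y j
      = ∑ i, x i * (lam * ∑ j, b j * y j) := Finset.sum_congr rfl fun i _ => by rw [this i]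
    _ = (∑ i, x i) * (lam * ∑ j, b j * y j) := by rw [Finset.sum_mul]
    _ = lam * (b ⬝ᵥ y) := by rw [hx.2, one_mul]; rfl

lemma dot_vecMulVec {m n : ℕ} (x a : Fin m → ℝ) (b y : Fin n → ℝ) :
    x ⬝ᵥ (vecMulVec a b).mulVec y = (x ⬝ᵥ a) * (b ⬝ᵥ y) := by
  simp only [dotProduct, mulVec, vecMulVec_apply]
  rw [Finset.sum_mul]
  refine Finset.sum_congr rfl fun i _ => ?_
  rw [Finset.mul_sum, Finset.mul_sum]
  exact Finset.sum_congr rfl fun j _ => by ring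

lemma equiv_lemma {m n : ℕ} {A : Matrix (Fin m) (Fin n) ℝ} {a : Fin m → ℝ} {b : Fin n → ℝ}
    {lam : ℝ} {x : Fin m → ℝ} {y : Fin n → ℝ}
    (hN : (lam, x, y) ∈ Nset A b) (ha : x ⬝ᵥ a = lam) :
    isNash A (-A + vecMulVec a b) x y := by
  rw [mem_Nset_iff] at hN
  obtain ⟨hx, hy, hmax, hmin⟩ := hN
  have key : ∀ (x' : Fin m → ℝ), x' ∈ simplex m → ∀ y' : Fin n → ℝ,
      x' ⬝ᵥ (A - Matrix.of fun _ j => lam * b j).mulVec y'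
        = x' ⬝ᵥ A.mulVec y' - lam * (b ⬝ᵥ y') := by
    intro x' hx' y'
    rw [sub_mulVec, dotProduct_sub, dot_const_mulVec hx' lam b y']
  have key2 : ∀ y' : Fin n → ℝ,
      x ⬝ᵥ (-A + vecMulVec a b).mulVec y' = -(x ⬝ᵥ A.mulVec y') + lam * (b ⬝ᵥ y') := by
    intro y'
    rw [add_mulVec, dotProduct_add, neg_mulVec, dotProduct_neg, dot_vecMulVec, ha]
  refine ⟨hx, hy, fun x' hx' => ?_, fun y' hy' => ?_⟩
  · have := hmax x' hx'
    rw [key x' hx' y, key x hx y] at this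
    linarith
  · have := hmin y' hy'
    rw [key x hx y, key x hx y'] at this
    rw [key2 y', key2 y]
    linarith

lemma cont_dot {m : ℕ} (a : Fin m → ℝ) : Continuous fun x : Fin m → ℝ => x ⬝ᵥ a := by
  simp only [dotProduct]
  exact continuous_finset_sum _ fun i _ => (continuous_apply i).mul continuous_const

lemma Nset_limit {m n : ℕ} (A : Matrix (Fin m) (Fin n) ℝ) (b : Fin n → ℝ) (a : Fin m → ℝ)
    {lamseq : ℕ → ℝ} {lam : ℝ} (hlam : Tendsto lamseq atTop (𝓝 lam))
    {xs : ℕ → Fin m → ℝ} {ys : ℕ → Fin n → ℝ}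
    (hN : ∀ k, (lamseq k, xs k, ys k) ∈ Nset A b) :
    ∃ x y, (lam, x, y) ∈ Nset A b ∧
      ((∀ k, lamseq k ≤ xs k ⬝ᵥ a) → lam ≤ x ⬝ᵥ a) ∧
      ((∀ k, xs k ⬝ᵥ a ≤ lamseq k) → x ⬝ᵥ a ≤ lam) := by
  have hmemk : ∀ k, (xs k, ys k) ∈ (simplex m) ×ˢ (simplex n) := by
    intro k
    exact ⟨(hN k).1, (hN k).2.1⟩
  obtain ⟨p, hp, φ, hφmono, hφtend⟩ :=
    ((isCompact_simplex m).prod (isCompact_simplex n)).tendsto_subseq hmemk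
  have hxt : Tendsto (fun k => xs (φ k)) atTop (𝓝 p.1) :=
    (continuous_fst.tendsto p).comp hφtend
  have hyt : Tendsto (fun k => ys (φ k)) atTop (𝓝 p.2) :=
    (continuous_snd.tendsto p).comp hφtend
  have hlt : Tendsto (fun k => lamseq (φ k)) atTop (𝓝 lam) :=
    hlam.comp hφmono.tendsto_atTop
  have htriple : Tendsto (fun k => (lamseq (φ k), xs (φ k), ys (φ k))) atTop
      (𝓝 (lam, p.1, p.2)) :=
    hlt.prodMk_nhds (hxt.prodMk_nhds hyt)
  have hmem : (lam, p.1, p.2) ∈ Nset A b :=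
    (isClosed_Nset A b).mem_of_tendsto htriple (Eventually.of_forall fun k => hN (φ k))
  have hdott : Tendsto (fun k => xs (φ k) ⬝ᵥ a) atTop (𝓝 (p.1 ⬝ᵥ a)) :=
    ((cont_dot a).tendsto p.1).comp hxt
  refine ⟨p.1, p.2, hmem, fun h => ?_, fun h => ?_⟩
  · exact le_of_tendsto_of_tendsto' hlt hdott fun k => h (φ k)
  · exact le_of_tendsto_of_tendsto' hdott hlt fun k => h (φ k)

theorem stmt19 {m n : ℕ} (A : Matrix (Fin m) (Fin n) ℝ)
    (a : Fin m → ℝ) (b : Fin n → ℝ) (ll ul : ℝ)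
    (xl xu : Fin m → ℝ) (yl yu : Fin n → ℝ)
    (hle : ll ≤ ul)
    (h1 : (ll, xl, yl) ∈ Nset A b) (h2 : ll ≤ xl ⬝ᵥ a)
    (h3 : (ul, xu, yu) ∈ Nset A b) (h4 : xu ⬝ᵥ a ≤ ul) :
    (∃ (lam : ℝ) (x : Fin m → ℝ) (y : Fin n → ℝ),
      (lam, x, y) ∈ Nset A b ∧ ll ≤ lam ∧ lam ≤ ul ∧ x ⬝ᵥ a = lam) ∧
    ∃ (x : Fin m → ℝ) (y : Fin n → ℝ), isNash A (-A + vecMulVec a b) x y := by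
  have hm : m ≠ 0 := simplex_ne_zero h1.1
  have hn : n ≠ 0 := simplex_ne_zero h1.2.1
  -- the set S
  set S : Set ℝ := {lam | lam ∈ Set.Icc ll ul ∧
    ∃ x y, (lam, x, y) ∈ Nset A b ∧ lam ≤ x ⬝ᵥ a} with hS
  have hllS : ll ∈ S := ⟨⟨le_refl ll, hle⟩, xl, yl, h1, h2⟩
  have hSne : S.Nonempty := ⟨ll, hllS⟩
  have hbdd : BddAbove S := ⟨ul, fun z hz => hz.1.2⟩
  set lam := sSup S with hlam
  have hlam1 : ll ≤ lam := le_csSup hbdd hllS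
  have hlam2 : lam ≤ ul := csSup_le hSne fun z hz => hz.1.2
  -- Claim A: equilibrium at lam with lam ≤ x ⬝ᵥ a
  obtain ⟨u, humono, hutend, huS⟩ := exists_seq_tendsto_sSup hSne hbdd
  choose xs ys hNs hles using fun k => (huS k).2
  rw [← hlam] at hutend
  obtain ⟨xh, yh, hNh, hA, -⟩ := Nset_limit A b a hutend hNs
  have hhia : lam ≤ xh ⬝ᵥ a := hA hles
  -- Claim B: equilibrium at lam with x ⬝ᵥ a ≤ lam
  have hB : ∃ x y, (lam, x, y) ∈ Nset A b ∧ x ⬝ᵥ a ≤ lam := by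
    rcases eq_or_lt_of_le hlam2 with heq | hlt
    · exact ⟨xu, yu, by rw [heq]; exact h3, by rw [heq]; exact h4⟩
    · set w : ℕ → ℝ := fun k => lam + min (ul - lam) (1 / (k + 1)) with hw
      have hwgt : ∀ k, lam < w k := by
        intro k
        have h1' : (0:ℝ) < ul - lam := by linarith
        have h2' : (0:ℝ) < 1 / ((k:ℝ) + 1) := by positivity
        have : 0 < min (ul - lam) (1 / ((k:ℝ) + 1)) := lt_min h1' h2'
        simp only [hw]; linarith
      have hwle : ∀ k, w k ≤ ul := by
        intro k
        have : min (ul - lam) (1 / ((k:ℝ) + 1)) ≤ ul - lam := min_le_left _ _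
        simp only [hw]; linarith
      have hwt : Tendsto w atTop (𝓝 lam) := by
        have h0 : Tendsto (fun k : ℕ => min (ul - lam) (1 / ((k:ℝ) + 1))) atTop (𝓝 0) := by
          have := tendsto_one_div_add_atTop_nhds_zero_nat (𝕜 := ℝ)
          have hmin := Filter.Tendsto.min (tendsto_const_nhds (x := ul - lam)) this
          rwa [min_eq_right (by linarith : (0:ℝ) ≤ ul - lam)] at hmin
        have h1' := Tendsto.add (tendsto_const_nhds (x := lam)) h0
        rw [add_zero] at h1'
        exact h1'
      -- choose equilibria at each w k
      have hex : ∀ k : ℕ, ∃ x y, (w k, x, y) ∈ Nset A b := by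
        intro k
        obtain ⟨x, hx, y, hy, hmax, hmin⟩ := exists_nash_zero_sum hm hn
          (A - Matrix.of fun _ j => (w k) * b j)
        exact ⟨x, y, (mem_Nset_iff A b (w k) x y).mpr ⟨hx, hy, hmax, hmin⟩⟩
      choose xs' ys' hNs' using hex
      have hnotS : ∀ k, xs' k ⬝ᵥ a ≤ w k := by
        intro k
        by_contra hcon
        push_neg at hcon
        have hmemS : w k ∈ S := ⟨⟨by linarith [hwgt k], hwle k⟩, xs' k, ys' k, hNs' k,
          le_of_lt hcon⟩
        have : w k ≤ lam := le_csSup hbdd hmemS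
        linarith [hwgt k]
      obtain ⟨x, y, hNx, -, hBle⟩ := Nset_limit A b a hwt hNs'
      exact ⟨x, y, hNx, hBle hnotS⟩
  obtain ⟨xlo, ylo, hNlo, hloa⟩ := hB
  -- combine via convexity
  have hhi : zsNash (A - Matrix.of fun _ j => lam * b j) xh yh := (mem_Nset_iff A b _ _ _).mp hNh
  have hlo : zsNash (A - Matrix.of fun _ j => lam * b j) xlo ylo :=
    (mem_Nset_iff A b _ _ _).mp hNlo
  set α := xh ⬝ᵥ a with hα
  set β := xlo ⬝ᵥ a with hβ
  have hkey : ∃ x y, (lam, x, y) ∈ Nset A b ∧ x ⬝ᵥ a = lam := by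
    rcases eq_or_lt_of_le (le_trans hloa hhia : β ≤ α) with heq | hltab
    · refine ⟨xh, yh, hNh, ?_⟩
      rw [← hα]
      rw [← heq] at hhia
      linarith
    · set t := (lam - β) / (α - β) with ht
      have ht0 : 0 ≤ t := div_nonneg (by linarith) (by linarith)
      have ht1 : t ≤ 1 := by
        rw [ht, div_le_one (by linarith)]
        linarith
      have hz := zs_comb hhi hlo ht0 ht1
      refine ⟨t • xh + (1 - t) • xlo, yh, (mem_Nset_iff A b _ _ _).mpr hz, ?_⟩
      rw [add_dotProduct, smul_dotProduct, smul_dotProduct]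
      simp only [smul_eq_mul, ← hα, ← hβ]
      have hne : α - β ≠ 0 := ne_of_gt (by linarith)
      have hcancel : t * (α - β) = lam - β := div_mul_cancel₀ _ hne
      linear_combination hcancel
  obtain ⟨x, y, hNxy, hxa⟩ := hkey
  exact ⟨⟨lam, x, y, hNxy, hlam1, hlam2, hxa⟩, x, y, equiv_lemma hNxy hxa⟩
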